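/- Let X ∈ ℝ^{m×n} have rank s < k ≤ min(m,n), and let F ∈ ℝ^{m×n}. If G is a best approximation (in Frobenius norm) of F in the tangent cone T_X M_{≤k}, then ‖G‖_F ≥ sqrt((k−s)/min(m−s, n−s)) · ‖F‖_F. -/

import Mathlib

open Matrix
/-- Column space of a matrix. -/
def colSpace {m n : ℕ} (X : Matrix (Fin m) (Fin n) ℝ) : Set (Fin m → ℝ) :=
  {y | ∃ v, X.mulVec v = y}

/-- Row space of a matrix. -/
def rowSpace {m n : ℕ} (X : Matrix (Fin m) (Fin n) ℝ) : Set (Fin n → ℝ) :=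
  colSpace Xᵀ

/-- Orthogonal complement (w.r.t. the Euclidean dot product) of a set of vectors. -/
def perp {p : ℕ} (S : Set (Fin p → ℝ)) : Set (Fin p → ℝ) :=
  {x | ∀ u ∈ S, ∑ i, x i * u i = 0}

/-- `A ⊗ B`: matrices whose column space lies in `A` and row space lies in `B`. -/
def tensorSp {m n : ℕ} (A : Set (Fin m → ℝ)) (B : Set (Fin n → ℝ)) :
    Set (Matrix (Fin m) (Fin n) ℝ) :=
  {Z | (∀ v, Z.mulVec v ∈ A) ∧ (∀ u, Zᵀ.mulVec u ∈ B)}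

/-- Frobenius inner product. -/
noncomputable def frobInner {m n : ℕ} (A B : Matrix (Fin m) (Fin n) ℝ) : ℝ :=
  ∑ i, ∑ j, A i j * B i j

/-- Frobenius norm. -/
noncomputable def frobNorm {m n : ℕ} (A : Matrix (Fin m) (Fin n) ℝ) : ℝ :=
  Real.sqrt (frobInner A A)

/-- The tangent space `T_X M_s = (U⊗V) ⊕ (U^⊥⊗V) ⊕ (U⊗V^⊥)`, `U, V` column/row space of `X`. -/
def tangentMs {m n : ℕ} (X : Matrix (Fin m) (Fin n) ℝ) : Set (Matrix (Fin m) (Fin n) ℝ) :=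
  {Ξ | ∃ Z₁ ∈ tensorSp (colSpace X) (rowSpace X),
       ∃ Z₂ ∈ tensorSp (perp (colSpace X)) (rowSpace X),
       ∃ Z₃ ∈ tensorSp (colSpace X) (perp (rowSpace X)), Ξ = Z₁ + Z₂ + Z₃}

/-- Sequential tangent cone of a set of matrices, w.r.t. Frobenius distance. -/
def matTangentCone {m n : ℕ} (M : Set (Matrix (Fin m) (Fin n) ℝ))
    (X : Matrix (Fin m) (Fin n) ℝ) : Set (Matrix (Fin m) (Fin n) ℝ) :=
  {Ξ | ∃ (Y : ℕ → Matrix (Fin m) (Fin n) ℝ) (a : ℕ → ℝ),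
      (∀ i, Y i ∈ M) ∧ (∀ i, 0 < a i) ∧
      Filter.Tendsto (fun i => frobNorm (Y i - X)) Filter.atTop (nhds 0) ∧
      Filter.Tendsto (fun i => frobNorm (a i • (Y i - X) - Ξ)) Filter.atTop (nhds 0)}

/-- `P` is the orthogonal projector (symmetric idempotent matrix) onto `U`. -/
def IsOrthProjOnto {p : ℕ} (P : Matrix (Fin p) (Fin p) ℝ) (U : Set (Fin p → ℝ)) : Prop :=
  Pᵀ = P ∧ P * P = P ∧ colSpace P = U

open scoped RealInnerProductSpace

namespace Stmt6Aux
variable {m n p q : ℕ}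

lemma frobInner_eq_trace (A B : Matrix (Fin m) (Fin n) ℝ) :
    frobInner A B = (Aᵀ * B).trace := by
  simp [frobInner, Matrix.trace, Matrix.diag, Matrix.mul_apply, mul_comm]
  rw [Finset.sum_comm]

lemma frobInner_comm (A B : Matrix (Fin m) (Fin n) ℝ) : frobInner A B = frobInner B A := by
  simp [frobInner, mul_comm]

lemma frobInner_add_left (A B C : Matrix (Fin m) (Fin n) ℝ) :
    frobInner (A + B) C = frobInner A C + frobInner B C := by
  simp [frobInner, add_mul, Finset.sum_add_distrib]

lemma frobInner_sub_left (A B C : Matrix (Fin m) (Fin n) ℝ) :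
    frobInner (A - B) C = frobInner A C - frobInner B C := by
  simp [frobInner, sub_mul, Finset.sum_sub_distrib]

lemma frobInner_smul_left (t : ℝ) (A B : Matrix (Fin m) (Fin n) ℝ) :
    frobInner (t • A) B = t * frobInner A B := by
  simp [frobInner, Finset.mul_sum, mul_assoc]

lemma frobInner_add_right (A B C : Matrix (Fin m) (Fin n) ℝ) :
    frobInner A (B + C) = frobInner A B + frobInner A C := by
  rw [frobInner_comm, frobInner_add_left, frobInner_comm B A, frobInner_comm C A]

lemma frobInner_sub_right (A B C : Matrix (Fin m) (Fin n) ℝ) :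
    frobInner A (B - C) = frobInner A B - frobInner A C := by
  rw [frobInner_comm, frobInner_sub_left, frobInner_comm B A, frobInner_comm C A]

lemma frobInner_smul_right (t : ℝ) (A B : Matrix (Fin m) (Fin n) ℝ) :
    frobInner A (t • B) = t * frobInner A B := by
  rw [frobInner_comm, frobInner_smul_left, frobInner_comm B A]

lemma frobInner_self_nonneg (A : Matrix (Fin m) (Fin n) ℝ) : 0 ≤ frobInner A A := by
  apply Finset.sum_nonneg
  intro i _
  exact Finset.sum_nonneg fun j _ => mul_self_nonneg _

lemma frobInner_self_eq_zero {A : Matrix (Fin m) (Fin n) ℝ} (h : frobInner A A = 0) : A = 0 := by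
  ext i j
  have h1 : ∀ i ∈ Finset.univ (α := Fin m), (0:ℝ) ≤ ∑ j, A i j * A i j :=
    fun i _ => Finset.sum_nonneg fun j _ => mul_self_nonneg _
  have h2 := (Finset.sum_eq_zero_iff_of_nonneg h1).mp h i (Finset.mem_univ i)
  have h3 := (Finset.sum_eq_zero_iff_of_nonneg
    (fun j _ => mul_self_nonneg (A i j))).mp h2 j (Finset.mem_univ j)
  simpa [mul_self_eq_zero] using h3

lemma frobNorm_eq (A : Matrix (Fin m) (Fin n) ℝ) : frobNorm A = Real.sqrt (frobInner A A) := rfl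

lemma frobInner_le_of_frobNorm_le {A B : Matrix (Fin m) (Fin n) ℝ}
    (h : frobNorm A ≤ frobNorm B) : frobInner A A ≤ frobInner B B := by
  exact (Real.sqrt_le_sqrt_iff (frobInner_self_nonneg B)).mp h

variable {m n : ℕ}

lemma frobInner_transpose (A B : Matrix (Fin m) (Fin n) ℝ) :
    frobInner Aᵀ Bᵀ = frobInner A B := by
  simp [frobInner]
  rw [Finset.sum_comm]

lemma key_trace (R : Matrix (Fin m) (Fin m) ℝ) (hRt : Rᵀ = R) (hRR : R * R = R)
    (M : Matrix (Fin m) (Fin n) ℝ) :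
    frobInner (R * M) (R * M) = (Mᵀ * (R * M)).trace := by
  rw [frobInner_eq_trace, Matrix.transpose_mul, hRt, Matrix.mul_assoc,
    ← Matrix.mul_assoc R R M, hRR]

lemma sym_idem_contract_left (R : Matrix (Fin m) (Fin m) ℝ) (hRt : Rᵀ = R) (hRR : R * R = R)
    (M : Matrix (Fin m) (Fin n) ℝ) :
    frobInner (R * M) (R * M) ≤ frobInner M M := by
  have hRt' : (1 - R)ᵀ = 1 - R := by
    rw [Matrix.transpose_sub, Matrix.transpose_one, hRt]
  have hRR' : (1 - R) * (1 - R) = 1 - R := by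
    rw [Matrix.sub_mul, Matrix.mul_sub, Matrix.mul_sub, hRR]
    simp
  have hsplit : frobInner M M = frobInner (R * M) (R * M)
      + frobInner ((1 - R) * M) ((1 - R) * M) := by
    rw [key_trace R hRt hRR, key_trace (1 - R) hRt' hRR', ← Matrix.trace_add, ← Matrix.mul_add,
      ← Matrix.add_mul]
    simp [frobInner_eq_trace]
  have := frobInner_self_nonneg ((1 - R) * M)
  linarith

lemma sym_idem_contract_right (R : Matrix (Fin n) (Fin n) ℝ) (hRt : Rᵀ = R) (hRR : R * R = R)
    (M : Matrix (Fin m) (Fin n) ℝ) :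
    frobInner (M * R) (M * R) ≤ frobInner M M := by
  have h := sym_idem_contract_left R hRt hRR Mᵀ
  rw [← frobInner_transpose (M * R) (M * R), ← frobInner_transpose M M, Matrix.transpose_mul, hRt]
  exact h

variable {m n : ℕ}

lemma mul_vecMulVec_of_eig {M : Matrix (Fin n) (Fin n) ℝ} {v : Fin n → ℝ} {lam : ℝ}
    (heig : M *ᵥ v = lam • v) :
    M * vecMulVec v v = lam • vecMulVec v v := by
  ext i j
  have : (M *ᵥ v) i = lam * v i := by rw [heig]; rfl
  simp only [Matrix.mul_apply, Matrix.vecMulVec_apply, Matrix.smul_apply, smul_eq_mul]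
  calc ∑ k, M i k * (v k * v j) = (∑ k, M i k * v k) * v j := by
        rw [Finset.sum_mul]; congr 1; ext k; ring
    _ = lam * (v i * v j) := by
        rw [show (∑ k, M i k * v k) = (M *ᵥ v) i from rfl, this]; ring

lemma vecMulVec_self_mul {v : Fin n → ℝ} (hv : v ⬝ᵥ v = 1) :
    vecMulVec v v * vecMulVec v v = vecMulVec v v := by
  ext i j
  simp only [Matrix.mul_apply, Matrix.vecMulVec_apply]
  calc ∑ k, v i * v k * (v k * v j) = (v ⬝ᵥ v) * (v i * v j) := by
        rw [dotProduct, Finset.sum_mul]; congr 1; ext k; ring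
    _ = v i * v j := by rw [hv, one_mul]

lemma trace_vecMulVec (v w : Fin n → ℝ) : (vecMulVec v w).trace = v ⬝ᵥ w := by
  simp [Matrix.trace, Matrix.diag, Matrix.vecMulVec_apply, dotProduct]

lemma vecMulVec_transpose' (v : Fin n → ℝ) : (vecMulVec v v)ᵀ = vecMulVec v v := by
  ext i j; simp [Matrix.vecMulVec_apply, mul_comm]

/-- norm reduction under one deflation step -/

lemma deflate_norm {A : Matrix (Fin m) (Fin n) ℝ} {v : Fin n → ℝ} {lam : ℝ}
    (hv : v ⬝ᵥ v = 1) (heig : (Aᵀ * A) *ᵥ v = lam • v) :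
    frobInner (A - A * vecMulVec v v) (A - A * vecMulVec v v) = frobInner A A - lam := by
  set R := vecMulVec v v with hR
  have h1 : Aᵀ * (A * R) = lam • R := by
    rw [← Matrix.mul_assoc, mul_vecMulVec_of_eig heig]
  have htr : frobInner A (A * R) = lam := by
    rw [frobInner_eq_trace, h1, Matrix.trace_smul, trace_vecMulVec, hv]
    simp
  have htr2 : frobInner (A * R) (A * R) = lam := by
    rw [frobInner_eq_trace, Matrix.transpose_mul, vecMulVec_transpose' v, Matrix.mul_assoc, h1,
      Matrix.mul_smul, Matrix.trace_smul, ← hR, vecMulVec_self_mul hv, trace_vecMulVec, hv]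
    simp
  have htr3 : frobInner (A * R) A = lam := by rw [frobInner_comm]; exact htr
  rw [frobInner_sub_left, frobInner_sub_right, frobInner_sub_right, htr, htr2, htr3]
  ring

variable {m n : ℕ}

lemma exists_top_eig {A : Matrix (Fin m) (Fin n) ℝ} (hA : A ≠ 0) :
    ∃ (lam : ℝ) (v : Fin n → ℝ), v ⬝ᵥ v = 1 ∧ (Aᵀ * A) *ᵥ v = lam • v ∧ 0 < lam ∧
      frobInner A A ≤ (A.rank : ℝ) * lam := by
  have hn : 0 < n := by
    rcases Nat.eq_zero_or_pos n with h | h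
    · subst h
      exact absurd (by ext i j; exact absurd j.isLt (by omega)) hA
    · exact h
  haveI : Nonempty (Fin n) := ⟨⟨0, hn⟩⟩
  set M := Aᵀ * A with hMdef
  have hM : M.IsHermitian := by
    have : Mᴴ = Mᵀ := rfl
    unfold Matrix.IsHermitian
    rw [this, hMdef, Matrix.transpose_mul, Matrix.transpose_transpose]
  obtain ⟨i₀, _, hmax⟩ := Finset.exists_max_image Finset.univ hM.eigenvalues
    Finset.univ_nonempty
  set lam := hM.eigenvalues i₀ with hlamdef
  set v : Fin n → ℝ := ⇑(hM.eigenvectorBasis i₀) with hvdef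
  have hv : v ⬝ᵥ v = 1 := by
    have h1 : ‖hM.eigenvectorBasis i₀‖ = 1 := hM.eigenvectorBasis.orthonormal.1 i₀
    have h2 : (⟪hM.eigenvectorBasis i₀, hM.eigenvectorBasis i₀⟫) = v ⬝ᵥ v := by
      rw [PiLp.inner_apply]
      simp [dotProduct, RCLike.inner_apply, hvdef, sq]
    rw [← h2, real_inner_self_eq_norm_sq, h1, one_pow]
  have heig : M *ᵥ v = lam • v := hM.mulVec_eigenvectorBasis i₀
  have htr : M.trace = ∑ i, hM.eigenvalues i := by
    nth_rewrite 1 [hM.spectral_theorem]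
    rw [Unitary.conjStarAlgAut_apply, Matrix.trace_mul_cycle,
      show (star (hM.eigenvectorUnitary : Matrix (Fin n) (Fin n) ℝ)) *
        (hM.eigenvectorUnitary : Matrix (Fin n) (Fin n) ℝ) = 1 from
        Unitary.coe_star_mul_self _, Matrix.one_mul, Matrix.trace_diagonal]
    simp
  have hN2tr : frobInner A A = M.trace := by rw [frobInner_eq_trace]
  have hN2pos : 0 < frobInner A A := by
    rcases lt_or_eq_of_le (frobInner_self_nonneg A) with h | h
    · exact h
    · exact absurd (frobInner_self_eq_zero h.symm) hA
  have hcard : M.rank = (Finset.univ.filter (fun i => hM.eigenvalues i ≠ 0)).card := by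
    rw [hM.rank_eq_card_non_zero_eigs, Fintype.card_subtype]
  have hbound : frobInner A A ≤ (A.rank : ℝ) * lam := by
    have h1 : ∑ i, hM.eigenvalues i
        = ∑ i ∈ Finset.univ.filter (fun i => hM.eigenvalues i ≠ 0), hM.eigenvalues i :=
      (Finset.sum_filter_ne_zero _).symm
    have h2 : ∑ i ∈ Finset.univ.filter (fun i => hM.eigenvalues i ≠ 0), hM.eigenvalues i
        ≤ (Finset.univ.filter (fun i => hM.eigenvalues i ≠ 0)).card • lam :=
      Finset.sum_le_card_nsmul _ _ _ (fun i _ => hmax i (Finset.mem_univ i))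
    have hrk : (Aᵀ * A).rank = A.rank := Matrix.rank_transpose_mul_self A
    rw [hN2tr, htr, h1]
    calc _ ≤ ((Finset.univ.filter (fun i => hM.eigenvalues i ≠ 0)).card : ℝ) * lam := by
          rw [← nsmul_eq_mul]; exact h2
      _ = (A.rank : ℝ) * lam := by rw [← hcard, hMdef, hrk]
  have hlampos : 0 < lam := by
    by_contra h
    push_neg at h
    have : (A.rank : ℝ) * lam ≤ 0 := mul_nonpos_of_nonneg_of_nonpos (Nat.cast_nonneg _) h
    linarith
  exact ⟨lam, v, hv, heig, hlampos, hbound⟩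

lemma vecMulVec_mulVec (v w y : Fin n → ℝ) :
    (vecMulVec v w) *ᵥ y = (w ⬝ᵥ y) • v := by
  ext i
  simp only [Matrix.mulVec, dotProduct, Matrix.vecMulVec_apply, Pi.smul_apply,
    smul_eq_mul]
  rw [Finset.sum_mul]
  exact Finset.sum_congr rfl fun j _ => by ring

lemma rank_deflate_lt {A : Matrix (Fin m) (Fin n) ℝ} {v : Fin n → ℝ} {lam : ℝ}
    (hv : v ⬝ᵥ v = 1) (hlam : lam ≠ 0) (heig : (Aᵀ * A) *ᵥ v = lam • v) :
    (A - A * vecMulVec v v).rank < A.rank := by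
  set T : Matrix (Fin n) (Fin n) ℝ := 1 - vecMulVec v v with hT
  have hAT : A - A * vecMulVec v v = A * T := by rw [hT, Matrix.mul_sub, Matrix.mul_one]
  have hTt : Tᵀ = T := by
    rw [hT, Matrix.transpose_sub, Matrix.transpose_one]
    congr 1
    ext i j; simp [Matrix.vecMulVec_apply, mul_comm]
  set W := LinearMap.range (Aᵀ.mulVecLin) with hW
  let ℓ : (Fin n → ℝ) →ₗ[ℝ] ℝ :=
    { toFun := fun x => v ⬝ᵥ x
      map_add' := fun x y => dotProduct_add v x y
      map_smul' := fun c x => by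
        simp only [dotProduct, Pi.smul_apply, smul_eq_mul, RingHom.id_apply,
          Finset.mul_sum]
        exact Finset.sum_congr rfl fun j _ => by ring }
  have hvW : v ∈ W := by
    refine ⟨lam⁻¹ • (A *ᵥ v), ?_⟩
    rw [Matrix.mulVecLin_apply, Matrix.mulVec_smul, Matrix.mulVec_mulVec, heig]
    rw [smul_smul, inv_mul_cancel₀ hlam, one_smul]
  have hTform : ∀ y, T *ᵥ y = y - (v ⬝ᵥ y) • v := by
    intro y
    rw [hT, Matrix.sub_mulVec, Matrix.one_mulVec, vecMulVec_mulVec]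
  have hmap : Submodule.map T.mulVecLin W ≤ W ⊓ LinearMap.ker ℓ := by
    rintro x hx
    obtain ⟨y, hy, rfl⟩ := Submodule.mem_map.mp hx
    refine Submodule.mem_inf.mpr ⟨?_, ?_⟩
    · rw [Matrix.mulVecLin_apply, hTform]
      exact Submodule.sub_mem W hy (Submodule.smul_mem W _ hvW)
    · rw [LinearMap.mem_ker]
      show v ⬝ᵥ (T.mulVecLin y) = 0
      rw [Matrix.mulVecLin_apply, hTform, dotProduct_sub, dotProduct_smul, hv]
      simp
  have hlt : W ⊓ LinearMap.ker ℓ < W := by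
    refine lt_of_le_of_ne inf_le_left (fun h => ?_)
    have : v ∈ W ⊓ LinearMap.ker ℓ := h.symm ▸ hvW
    have h0 : ℓ v = 0 := this.2
    have h1 : ℓ v = 1 := by show v ⬝ᵥ v = 1; exact hv
    rw [h0] at h1; exact absurd h1.symm one_ne_zero
  have key : (A * T).rank < A.rank := by
    rw [← Matrix.rank_transpose (A * T), Matrix.transpose_mul, hTt]
    have h1 : (T * Aᵀ).rank = Module.finrank ℝ (Submodule.map T.mulVecLin W) := by
      rw [Matrix.rank, Matrix.mulVecLin_mul, LinearMap.range_comp, hW]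
    rw [h1, ← Matrix.rank_transpose A]
    have h2 : Aᵀ.rank = Module.finrank ℝ W := rfl
    rw [h2]
    exact lt_of_le_of_lt (Submodule.finrank_mono hmap)
      (Submodule.finrank_lt_finrank_of_lt hlt)
  rw [hAT]; exact key

variable {m n : ℕ}

lemma matrix_rank_add_le (A B : Matrix (Fin m) (Fin n) ℝ) :
    (A + B).rank ≤ A.rank + B.rank := by
  have h : LinearMap.range (A + B).mulVecLin
      ≤ LinearMap.range A.mulVecLin ⊔ LinearMap.range B.mulVecLin := by
    rintro x ⟨y, rfl⟩
    rw [Matrix.mulVecLin_apply, Matrix.add_mulVec]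
    exact Submodule.add_mem_sup ⟨y, rfl⟩ ⟨y, rfl⟩
  have h1 : (A + B).rank
      ≤ Module.finrank ℝ ↥(LinearMap.range A.mulVecLin ⊔ LinearMap.range B.mulVecLin) :=
    Submodule.finrank_mono h
  have h2 : Module.finrank ℝ ↥(LinearMap.range A.mulVecLin ⊔ LinearMap.range B.mulVecLin)
      ≤ A.rank + B.rank := Submodule.finrank_add_le_finrank_add_finrank _ _
  omega

lemma exists_factor {p' : ℕ} {B : Matrix (Fin m) (Fin p') ℝ} {A : Matrix (Fin m) (Fin n) ℝ}
    (h : LinearMap.range B.mulVecLin ≤ LinearMap.range A.mulVecLin) :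
    ∃ T : Matrix (Fin n) (Fin p') ℝ, B = A * T := by
  have hc : ∀ j, ∃ x, A *ᵥ x = B *ᵥ Pi.single j 1 := by
    intro j
    obtain ⟨x, hx⟩ := h ⟨Pi.single j 1, rfl⟩
    exact ⟨x, hx⟩
  refine ⟨Matrix.of (fun i j => (hc j).choose i), ?_⟩
  ext i j
  have h1 : (A *ᵥ (hc j).choose) i = (B *ᵥ Pi.single j 1) i := by rw [(hc j).choose_spec]
  have h2 : (B *ᵥ Pi.single j 1) i = B i j := by
    simp [Matrix.mulVec, dotProduct, Pi.single_apply]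
  rw [Matrix.mul_apply]
  rw [show (∑ l, A i l * Matrix.of (fun i j => (hc j).choose i) l j)
      = (A *ᵥ (hc j).choose) i from rfl] at *
  rw [h1, h2]

lemma exists_orthproj {s : ℕ} (X : Matrix (Fin m) (Fin n) ℝ) (hr : X.rank = s) :
    ∃ P : Matrix (Fin m) (Fin m) ℝ, Pᵀ = P ∧ P * P = P ∧ (∃ T : Matrix (Fin n) (Fin m) ℝ, P = X * T) ∧
      (1 - P).rank = m - s := by
  classical
  set eL := (WithLp.linearEquiv 2 ℝ (Fin m → ℝ)) with heL
  set K : Submodule ℝ (EuclideanSpace ℝ (Fin m)) :=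
    Submodule.map (eL.symm : (Fin m → ℝ) →ₗ[ℝ] EuclideanSpace ℝ (Fin m))
      (LinearMap.range X.mulVecLin) with hK
  set pr : EuclideanSpace ℝ (Fin m) →ₗ[ℝ] EuclideanSpace ℝ (Fin m) :=
    (K.subtype.comp (K.orthogonalProjectionOnto).toLinearMap) with hpr
  set Pl : (Fin m → ℝ) →ₗ[ℝ] (Fin m → ℝ) :=
    ((eL : EuclideanSpace ℝ (Fin m) →ₗ[ℝ] (Fin m → ℝ)).comp pr).comp
      (eL.symm : (Fin m → ℝ) →ₗ[ℝ] EuclideanSpace ℝ (Fin m)) with hPl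
  have hPlapply : ∀ x, Pl x = eL (pr (eL.symm x)) := fun x => rfl
  have hprmem : ∀ y, pr y ∈ K := fun y => (K.orthogonalProjectionOnto y).2
  have hprK : ∀ y ∈ K, pr y = y := by
    intro y hy
    show (↑(K.orthogonalProjectionOnto y) : EuclideanSpace ℝ (Fin m)) = y
    rw [show y = ↑(⟨y, hy⟩ : K) from rfl, Submodule.orthogonalProjectionOnto_mem_subspace_eq_self]
  set P := LinearMap.toMatrix' Pl with hP
  have hmvl : P.mulVecLin = Pl := by
    rw [hP, ← Matrix.toLin'_apply', Matrix.toLin'_toMatrix']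
  refine ⟨P, ?_, ?_, ?_, ?_⟩
  · -- symmetry
    have hsym : ∀ x y : Fin m → ℝ, (Pl x) ⬝ᵥ y = x ⬝ᵥ (Pl y) := by
      intro x y
      have h1 : ∀ (u w : EuclideanSpace ℝ (Fin m)), (⟪u, w⟫) = (eL u) ⬝ᵥ (eL w) := by
        intro u w
        rw [PiLp.inner_apply]
        simp only [dotProduct, RCLike.inner_apply, starRingEnd_apply, star_trivial]
        exact Finset.sum_congr rfl fun i _ => mul_comm _ _
      have h2 := Submodule.inner_starProjection_left_eq_right K (eL.symm x) (eL.symm y)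
      have h3 : (⟪(pr (eL.symm x) : EuclideanSpace ℝ (Fin m)), eL.symm y⟫)
          = (⟪eL.symm x, (pr (eL.symm y) : EuclideanSpace ℝ (Fin m))⟫) := h2
      rw [h1, h1] at h3
      simpa [hPlapply] using h3
    ext i j
    have e1 : ∀ (M : Matrix (Fin m) (Fin m) ℝ) i j, M i j = (M.mulVecLin (Pi.single j 1)) i := by
      intro M i j
      simp [Matrix.mulVecLin_apply, Matrix.mulVec, dotProduct, Pi.single_apply]
    rw [Matrix.transpose_apply, e1 P j i, e1 P i j, hmvl]
    have d1 : ∀ z : Fin m → ℝ, ∀ i, z i = z ⬝ᵥ Pi.single i 1 := by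
      intro z i; simp [dotProduct, Pi.single_apply]
    rw [d1 (Pl (Pi.single i 1)) j, hsym, d1 (Pl (Pi.single j 1)) i, dotProduct_comm]
  · -- idempotent
    rw [hP, ← LinearMap.toMatrix'_comp]
    congr 1
    apply LinearMap.ext
    intro x
    show Pl (Pl x) = Pl x
    rw [hPlapply, hPlapply, LinearEquiv.symm_apply_apply]
    exact congrArg eL (hprK _ (hprmem _))
  · -- factorization
    apply exists_factor
    rw [hmvl]
    rintro x ⟨y, rfl⟩
    have : pr (eL.symm y) ∈ K := hprmem _
    rw [hK] at this
    obtain ⟨z, hz, hz2⟩ := this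
    obtain ⟨w, hw⟩ := hz
    refine ⟨w, ?_⟩
    rw [hPlapply]
    rw [← hz2, hw]
    exact (LinearEquiv.apply_symm_apply eL z).symm ▸ rfl
  · -- rank of complement
    have hmvl1 : (1 - P).mulVecLin = LinearMap.id - Pl := by
      apply LinearMap.ext
      intro x
      show (1 - P) *ᵥ x = x - Pl x
      rw [Matrix.sub_mulVec, Matrix.one_mulVec]
      congr 1
      rw [← hmvl]; rfl
    have hrange : LinearMap.range (LinearMap.id - Pl)
        = Submodule.map (eL : EuclideanSpace ℝ (Fin m) →ₗ[ℝ] (Fin m → ℝ)) Kᗮ := by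
      apply le_antisymm
      · rintro x ⟨y, rfl⟩
        refine ⟨eL.symm y - pr (eL.symm y), Submodule.sub_starProjection_mem_orthogonal _, ?_⟩
        show eL (eL.symm y - pr (eL.symm y)) = LinearMap.id y - Pl y
        rw [map_sub, LinearEquiv.apply_symm_apply, hPlapply]
        rfl
      · rintro x ⟨y, hy, rfl⟩
        refine ⟨eL y, ?_⟩
        show LinearMap.id (eL y) - Pl (eL y) = eL y
        rw [hPlapply, LinearEquiv.symm_apply_apply]
        have : K.orthogonalProjectionOnto y = 0 :=
          Submodule.orthogonalProjectionOnto_apply_of_mem_orthogonal hy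
        have hpy : pr y = 0 := by rw [hpr]; simp [this]
        rw [hpy]
        simp
    have hrk : (1 - P).rank = Module.finrank ℝ (LinearMap.range (1 - P).mulVecLin) := rfl
    rw [hrk, hmvl1, hrange, LinearEquiv.finrank_map_eq]
    have hKs : Module.finrank ℝ K = s := by
      rw [hK, LinearEquiv.finrank_map_eq]
      rw [← hr]; rfl
    have := Submodule.finrank_add_finrank_orthogonal K
    have hE : Module.finrank ℝ (EuclideanSpace ℝ (Fin m)) = m := by
      simp [finrank_euclideanSpace]
    rw [hKs, hE] at this
    exact (Nat.sub_eq_of_eq_add' this.symm).symm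
variable {m n : ℕ}

lemma N2_smul_add (a b : ℝ) (U W : Matrix (Fin m) (Fin n) ℝ) :
    frobInner (a • U + b • W) (a • U + b • W)
      = a * a * frobInner U U + 2 * (a * b) * frobInner U W + b * b * frobInner W W := by
  simp only [frobInner_add_left, frobInner_add_right, frobInner_smul_left,
    frobInner_smul_right]
  linear_combination (a * b) * frobInner_comm W U

lemma tendsto_frobNorm_zero {f : ℕ → Matrix (Fin m) (Fin n) ℝ}
    (h : Filter.Tendsto (fun i => frobInner (f i) (f i)) Filter.atTop (nhds 0)) :
    Filter.Tendsto (fun i => frobNorm (f i)) Filter.atTop (nhds 0) := by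
  have h2 := (Real.continuous_sqrt.tendsto 0).comp h
  simpa [frobNorm, Function.comp_def, Real.sqrt_zero] using h2

lemma tendsto_tinv : Filter.Tendsto (fun i : ℕ => ((i : ℝ) + 1)⁻¹) Filter.atTop (nhds 0) := by
  simpa [one_div] using tendsto_one_div_add_atTop_nhds_zero_nat (𝕜 := ℝ)

/-- main membership lemma -/

lemma mem_cone {k : ℕ} (X : Matrix (Fin m) (Fin n) ℝ)
    (C : Matrix (Fin m) (Fin m) ℝ) (D : Matrix (Fin n) (Fin n) ℝ)
    (B : Matrix (Fin m) (Fin n) ℝ) (hB : X.rank + B.rank ≤ k)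
    (hradd : ∀ A1 A2 : Matrix (Fin m) (Fin n) ℝ, (A1 + A2).rank ≤ A1.rank + A2.rank) :
    C * X + X * D + B ∈ matTangentCone {Y : Matrix (Fin m) (Fin n) ℝ | Y.rank ≤ k} X := by
  set Ξ := C * X + X * D + B with hΞ
  set W := C * X * D with hW
  set t : ℕ → ℝ := fun i => ((i : ℝ) + 1)⁻¹ with ht
  have htpos : ∀ i, 0 < t i := fun i => by positivity
  refine ⟨fun i => X + t i • Ξ + (t i)^2 • W, fun i => (i : ℝ) + 1, ?_, fun i => by positivity,
    ?_, ?_⟩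
  · -- rank bound
    intro i
    have hfact : X + t i • Ξ + (t i)^2 • W
        = (1 + t i • C) * X * (1 + t i • D) + t i • B := by
      rw [hΞ, hW]
      simp only [Matrix.add_mul, Matrix.mul_add, Matrix.one_mul, Matrix.mul_one,
        Matrix.smul_mul, Matrix.mul_smul, smul_add, smul_smul, pow_two]
      abel
    show ((X + t i • Ξ + (t i)^2 • W).rank ≤ k)
    rw [hfact]
    have h1 : ((1 + t i • C) * X * (1 + t i • D)).rank ≤ X.rank := by
      apply le_trans (Matrix.rank_mul_le_left _ _)
      exact Matrix.rank_mul_le_right _ _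
    have h2 : (t i • B).rank ≤ B.rank := by
      have : t i • B = B * (t i • (1 : Matrix (Fin n) (Fin n) ℝ)) := by
        rw [Matrix.mul_smul, Matrix.mul_one]
      rw [this]
      exact Matrix.rank_mul_le_left _ _
    exact le_trans (hradd _ _) (by omega)
  · -- Y i → X
    apply tendsto_frobNorm_zero
    have hfun : (fun i => frobInner ((X + t i • Ξ + (t i)^2 • W) - X)
        ((X + t i • Ξ + (t i)^2 • W) - X))
        = (fun s : ℝ => s * s * frobInner Ξ Ξ + 2 * (s * s^2) * frobInner Ξ W
            + s^2 * s^2 * frobInner W W) ∘ t := by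
      funext i
      have : (X + t i • Ξ + (t i)^2 • W) - X = t i • Ξ + (t i)^2 • W := by abel
      rw [this, Function.comp_apply, N2_smul_add]
    rw [hfun]
    have hcont : Continuous (fun s : ℝ => s * s * frobInner Ξ Ξ + 2 * (s * s^2) * frobInner Ξ W
        + s^2 * s^2 * frobInner W W) := by continuity
    have := (hcont.tendsto 0).comp tendsto_tinv
    simpa using this
  · -- a i • (Y i - X) → Ξ
    apply tendsto_frobNorm_zero
    have hfun : (fun i : ℕ => frobInner ((((i : ℝ) + 1) • ((X + t i • Ξ + (t i)^2 • W) - X)) - Ξ)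
        ((((i : ℝ) + 1) • ((X + t i • Ξ + (t i)^2 • W) - X)) - Ξ))
        = (fun s : ℝ => s * s * frobInner W W) ∘ t := by
      funext i
      have hne : ((i : ℝ) + 1) ≠ 0 := by positivity
      have h1 : (X + t i • Ξ + (t i)^2 • W) - X = t i • Ξ + (t i)^2 • W := by abel
      have e1 : ((i : ℝ) + 1) * t i = 1 := by rw [ht]; field_simp
      have e2 : ((i : ℝ) + 1) * (t i)^2 = t i := by rw [ht]; field_simp
      have h2 : ((i : ℝ) + 1) • (t i • Ξ + (t i)^2 • W) - Ξ = t i • W := by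
        rw [smul_add, smul_smul, smul_smul, e1, e2, one_smul]
        abel
      rw [h1, h2, Function.comp_apply, frobInner_smul_left, frobInner_smul_right]
      ring
    rw [hfun]
    have hcont : Continuous (fun s : ℝ => s * s * frobInner W W) := by continuity
    have := (hcont.tendsto 0).comp tendsto_tinv
    simpa using this

lemma frobNorm_smul (t : ℝ) (A : Matrix (Fin m) (Fin n) ℝ) :
    frobNorm (t • A) = |t| * frobNorm A := by
  have h1 : frobInner (t • A) (t • A) = t * t * frobInner A A := by
    rw [frobInner_smul_left, frobInner_smul_right]; ring
  rw [frobNorm, h1, Real.sqrt_mul (mul_self_nonneg t), Real.sqrt_mul_self_eq_abs, frobNorm]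

lemma smul_mem_cone {M : Set (Matrix (Fin m) (Fin n) ℝ)} {X Ξ : Matrix (Fin m) (Fin n) ℝ}
    {t : ℝ} (ht : 0 < t) (h : Ξ ∈ matTangentCone M X) : t • Ξ ∈ matTangentCone M X := by
  obtain ⟨Y, a, hY, ha, h1, h2⟩ := h
  refine ⟨Y, fun i => t * a i, hY, fun i => mul_pos ht (ha i), h1, ?_⟩
  have hfun : (fun i => frobNorm ((t * a i) • (Y i - X) - t • Ξ))
      = fun i => t * frobNorm (a i • (Y i - X) - Ξ) := by
    funext i
    rw [show (t * a i) • (Y i - X) - t • Ξ = t • (a i • (Y i - X) - Ξ) by module]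
    rw [frobNorm_smul, abs_of_pos ht]
  rw [hfun]
  have := h2.const_mul t
  simpa using this

lemma zero_mem_cone {M : Set (Matrix (Fin m) (Fin n) ℝ)} {X : Matrix (Fin m) (Fin n) ℝ}
    (hX : X ∈ M) : 0 ∈ matTangentCone M X := by
  refine ⟨fun _ => X, fun _ => 1, fun _ => hX, fun _ => one_pos, ?_, ?_⟩
  · have : (fun _ : ℕ => frobNorm (X - X)) = fun _ => 0 := by
      funext i; simp [frobNorm, frobInner]
    rw [this]; exact tendsto_const_nhds
  · have : (fun i : ℕ => frobNorm ((1:ℝ) • (X - X) - 0)) = fun _ => 0 := by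
      funext i; simp [frobNorm, frobInner]
    rw [this]; exact tendsto_const_nhds

lemma pythag {F G : Matrix (Fin m) (Fin n) ℝ}
    (h0 : ∀ t : ℝ, 0 ≤ t →
      frobInner (F - G) (F - G) ≤ frobInner (F - t • G) (F - t • G)) :
    frobInner F F = frobInner (F - G) (F - G) + frobInner G G := by
  set c := frobInner (F - G) G with hc
  set b := frobInner G G with hb
  have hbnn : 0 ≤ b := frobInner_self_nonneg G
  have hexp : ∀ t : ℝ, frobInner (F - t • G) (F - t • G)
      = frobInner (F - G) (F - G) + 2 * (1 - t) * c + (1 - t)^2 * b := by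
    intro t
    have h1 : F - t • G = (F - G) + (1 - t) • G := by
      rw [sub_smul, one_smul]; abel
    rw [h1, frobInner_add_left, frobInner_add_right, frobInner_add_right,
      frobInner_smul_left, frobInner_smul_right, frobInner_smul_left, frobInner_smul_right,
      frobInner_comm G (F - G), ← hc, ← hb]
    ring
  have hczero : c = 0 := by
    by_contra hcne
    have hcpos : 0 < c^2 := by positivity
    set ε := min (1/(b+1)) (1/(|c|+1)) with hε
    have hε0 : 0 < ε := lt_min (by positivity) (by positivity)
    have hεb : ε * b < 2 := by
      have h1 : ε * b ≤ (1/(b+1)) * b :=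
        mul_le_mul_of_nonneg_right (min_le_left _ _) hbnn
      have h2 : (1/(b+1)) * b < 2 := by
        rw [div_mul_eq_mul_div, div_lt_iff₀ (by linarith)]
        nlinarith
      linarith
    have hεc : ε * |c| ≤ 1 := by
      have h1 : ε * |c| ≤ (1/(|c|+1)) * |c| :=
        mul_le_mul_of_nonneg_right (min_le_right _ _) (abs_nonneg c)
      have h2 : (1/(|c|+1)) * |c| ≤ 1 := by
        rw [div_mul_eq_mul_div, div_le_iff₀ (by positivity)]
        nlinarith [abs_nonneg c]
      linarith
    have htn : 0 ≤ 1 + c * ε := by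
      rcases le_or_gt 0 c with h | h
      · nlinarith
      · have : |c| = -c := abs_of_neg h
        nlinarith
    have hineq := h0 (1 + c * ε) htn
    rw [hexp] at hineq
    have hr : 2 * (1 - (1 + c * ε)) * c + (1 - (1 + c * ε))^2 * b = c^2 * ε * (ε * b - 2) := by
      ring
    nlinarith [mul_pos hcpos hε0]
  have hF : F = (F - G) + G := by abel
  calc frobInner F F = frobInner ((F - G) + G) ((F - G) + G) := by rw [← hF]
    _ = frobInner (F - G) (F - G) + 2 * c + b := by
        rw [frobInner_add_left, frobInner_add_right, frobInner_add_right,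
          frobInner_comm G (F - G), ← hc, ← hb]
        ring
    _ = frobInner (F - G) (F - G) + frobInner G G := by rw [hczero, ← hb]; ring
lemma rank_zero_eq_zero {A : Matrix (Fin m) (Fin n) ℝ} (h : A.rank = 0) : A = 0 := by
  have h1 : LinearMap.range A.mulVecLin = ⊥ := Submodule.finrank_eq_zero.mp h
  ext i j
  have h2 : A.mulVecLin (Pi.single j 1) ∈ (⊥ : Submodule ℝ (Fin m → ℝ)) :=
    h1 ▸ LinearMap.mem_range_self _ _
  have h3 : A *ᵥ Pi.single j 1 = 0 := by simpa using h2
  have h4 := congrFun h3 i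
  simpa [Matrix.mulVec, dotProduct, Pi.single_apply] using h4

lemma defl : ∀ (p j : ℕ) (A : Matrix (Fin m) (Fin n) ℝ), j ≤ p → A.rank ≤ p →
    ∃ B : Matrix (Fin m) (Fin n) ℝ, B.rank ≤ j ∧
      frobInner (A - B) (A - B) ≤ ((p - j : ℕ) : ℝ) / (p : ℝ) * frobInner A A := by
  intro p
  induction p with
  | zero =>
    intro j A hj hr
    have hj0 : j = 0 := Nat.le_zero.mp hj
    have hA : A = 0 := by
      have : A.rank = 0 := Nat.le_zero.mp hr
      exact rank_zero_eq_zero this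
    subst hj0; subst hA
    exact ⟨0, by simp [Matrix.rank_zero], by simp [frobInner]⟩
  | succ p ih =>
    intro j A hj hr
    rcases Nat.eq_zero_or_pos j with hj0 | hjpos
    · subst hj0
      refine ⟨0, by simp [Matrix.rank_zero], ?_⟩
      have h1 : ((p + 1 - 0 : ℕ) : ℝ) / ((p + 1 : ℕ) : ℝ) = 1 := by
        rw [Nat.sub_zero, div_self (by positivity)]
      rw [sub_zero]
      push_cast
      push_cast at h1
      rw [h1, one_mul]
    · obtain ⟨j', rfl⟩ : ∃ j', j = j' + 1 := ⟨j - 1, by omega⟩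
      by_cases hA : A = 0
      · subst hA
        refine ⟨0, by simp [Matrix.rank_zero], ?_⟩
        have h0 : frobInner (0 - 0 : Matrix (Fin m) (Fin n) ℝ) (0 - 0) = 0 := by
          simp [frobInner]
        have h1 : frobInner (0 : Matrix (Fin m) (Fin n) ℝ) 0 = 0 := by simp [frobInner]
        rw [h0, h1, mul_zero]
      · obtain ⟨lam, v, hv, heig, hlam, hbound⟩ := exists_top_eig hA
        set A' := A - A * vecMulVec v v with hA'
        have hlt : A'.rank < A.rank := rank_deflate_lt hv (ne_of_gt hlam) heig
        have hA'r : A'.rank ≤ p := by omega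
        obtain ⟨B', hB'r, hB'⟩ := ih j' A' (by omega) hA'r
        refine ⟨A * vecMulVec v v + B', ?_, ?_⟩
        · have h1 : (A * vecMulVec v v).rank ≤ 1 := by
            have h2 : (A * vecMulVec v v).rank ≤ (vecMulVec v v).rank :=
              Matrix.rank_mul_le_right _ _
            have h3 : (vecMulVec v v).rank ≤ 1 := by
              rw [Matrix.vecMulVec_eq (Fin 1)]
              refine le_trans (Matrix.rank_mul_le_left _ _) ?_
              refine le_trans (Matrix.rank_le_card_width _) ?_
              simp
            omega
          have := matrix_rank_add_le (A * vecMulVec v v) B'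
          omega
        · have hsub : A - (A * vecMulVec v v + B') = A' - B' := by
            rw [hA']; abel
          rw [hsub]
          have hnorm : frobInner A' A' = frobInner A A - lam := deflate_norm hv heig
          have hq : ((p + 1 - (j' + 1) : ℕ) : ℝ) = ((p - j' : ℕ) : ℝ) := by
            congr 1; omega
          rw [hq]
          rcases Nat.eq_zero_or_pos p with hp | hp
          · subst hp
            have hj'0 : j' = 0 := by omega
            subst hj'0
            have : frobInner (A' - B') (A' - B') ≤ 0 := by
              have := hB'
              simpa using this
            have hr2 : (0:ℝ) ≤ ((0:ℕ):ℝ) / ((0+1:ℕ):ℝ) * frobInner A A := by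
              norm_num
            calc frobInner (A' - B') (A' - B') ≤ 0 := this
              _ ≤ _ := hr2
          · have hppos : (0:ℝ) < (p:ℝ) := by exact_mod_cast hp
            have hlb : frobInner A A ≤ ((p:ℝ) + 1) * lam := by
              refine le_trans hbound ?_
              have hrk : ((A.rank : ℝ)) ≤ (p:ℝ) + 1 := by exact_mod_cast hr
              exact mul_le_mul_of_nonneg_right hrk (le_of_lt hlam)
            have hstep : frobInner A A - lam ≤ (p:ℝ) / ((p:ℝ) + 1) * frobInner A A := by
              rw [div_mul_eq_mul_div, le_div_iff₀ (by linarith)]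
              nlinarith
            have hqnn : (0:ℝ) ≤ ((p - j' : ℕ) : ℝ) / (p:ℝ) := by positivity
            calc frobInner (A' - B') (A' - B')
                ≤ ((p - j' : ℕ) : ℝ) / (p : ℝ) * frobInner A' A' := hB'
              _ = ((p - j' : ℕ) : ℝ) / (p : ℝ) * (frobInner A A - lam) := by rw [hnorm]
              _ ≤ ((p - j' : ℕ) : ℝ) / (p : ℝ) * ((p:ℝ) / ((p:ℝ) + 1) * frobInner A A) :=
                  mul_le_mul_of_nonneg_left hstep hqnn
              _ = ((p - j' : ℕ) : ℝ) / (((p:ℕ) + 1 : ℕ) : ℝ) * frobInner A A := by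
                  push_cast
                  field_simp

end Stmt6Aux

open Stmt6Aux

/-- If `rank X = s < k ≤ min(m,n)` and `G` is a best Frobenius-norm
approximation of `F` in the tangent cone `T_X M_{≤k}`, then
`‖G‖_F ≥ sqrt((k−s)/min(m−s,n−s)) ‖F‖_F`. -/
theorem stmt_6 {m n s k : ℕ} (X : Matrix (Fin m) (Fin n) ℝ)
    (hrank : X.rank = s) (hsk : s < k) (hkm : k ≤ m) (hkn : k ≤ n)
    (F G : Matrix (Fin m) (Fin n) ℝ)
    (hG : G ∈ matTangentCone {Y : Matrix (Fin m) (Fin n) ℝ | Y.rank ≤ k} X)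
    (hbest : ∀ H ∈ matTangentCone {Y : Matrix (Fin m) (Fin n) ℝ | Y.rank ≤ k} X,
      frobNorm (F - G) ≤ frobNorm (F - H)) :
    Real.sqrt (((k : ℝ) - s) / min ((m : ℝ) - s) ((n : ℝ) - s)) * frobNorm F
      ≤ frobNorm G := by
  classical
  have hsm : s ≤ m := le_trans (le_of_lt hsk) hkm
  have hsn : s ≤ n := le_trans (le_of_lt hsk) hkn
  obtain ⟨P, hPt, hPP, ⟨TP, hTP⟩, hPrank⟩ := exists_orthproj X hrank
  obtain ⟨Q, hQt, hQQ, ⟨TQ, hTQ⟩, hQrank⟩ :=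
    exists_orthproj (s := s) Xᵀ (by simp [Matrix.rank_transpose, hrank])
  set A := (1 - P) * F * (1 - Q) with hA
  set pp := min (m - s) (n - s) with hpp
  set j := k - s with hj
  have hjp : j ≤ pp := by rw [hj, hpp]; omega
  have hjpos : 0 < j := by rw [hj]; omega
  have hArank : A.rank ≤ pp := by
    have h1 : A.rank ≤ (1 - P).rank :=
      le_trans (Matrix.rank_mul_le_left _ _) (Matrix.rank_mul_le_left _ _)
    have h2 : A.rank ≤ (1 - Q).rank := Matrix.rank_mul_le_right _ _
    rw [hPrank] at h1; rw [hQrank] at h2; rw [hpp]; exact le_min h1 h2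
  obtain ⟨B, hBrank, hBnorm⟩ := defl pp j A hjp hArank
  have hPt' : (1 - P)ᵀ = 1 - P := by rw [Matrix.transpose_sub, Matrix.transpose_one, hPt]
  have hPP' : (1 - P) * (1 - P) = 1 - P := by
    rw [Matrix.sub_mul, Matrix.mul_sub, Matrix.mul_sub, hPP]; simp
  have hQt' : (1 - Q)ᵀ = 1 - Q := by rw [Matrix.transpose_sub, Matrix.transpose_one, hQt]
  have hQQ' : (1 - Q) * (1 - Q) = 1 - Q := by
    rw [Matrix.sub_mul, Matrix.mul_sub, Matrix.mul_sub, hQQ]; simp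
  have hcontr : frobInner A A ≤ frobInner F F := by
    have hA2 : A = (1 - P) * (F * (1 - Q)) := by rw [hA, Matrix.mul_assoc]
    have h1 : frobInner A A ≤ frobInner (F * (1 - Q)) (F * (1 - Q)) := by
      rw [hA2]; exact sym_idem_contract_left (1 - P) hPt' hPP' _
    have h2 : frobInner (F * (1 - Q)) (F * (1 - Q)) ≤ frobInner F F :=
      sym_idem_contract_right (1 - Q) hQt' hQQ' F
    linarith
  set H := F * Q + P * F * (1 - Q) + B with hH
  have hHmem : H ∈ matTangentCone {Y : Matrix (Fin m) (Fin n) ℝ | Y.rank ≤ k} X := by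
    have hQ' : Q = TQᵀ * X := by
      rw [← hQt, hTQ, Matrix.transpose_mul, Matrix.transpose_transpose]
    have hHeq : H = (F * TQᵀ) * X + X * (TP * (F * (1 - Q))) + B := by
      rw [hH]
      congr 1
      congr 1
      · rw [Matrix.mul_assoc, ← hQ']
      · rw [← Matrix.mul_assoc, ← hTP, Matrix.mul_assoc]
    rw [hHeq]
    refine mem_cone X _ _ B ?_ matrix_rank_add_le
    rw [hj] at hBrank
    rw [hrank]
    omega
  have hFH : F - H = A - B := by
    rw [hH, hA]
    simp only [Matrix.sub_mul, Matrix.mul_sub, Matrix.one_mul, Matrix.mul_one]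
    abel
  have hpy : frobInner F F = frobInner (F - G) (F - G) + frobInner G G := by
    apply pythag
    intro t ht
    rcases eq_or_lt_of_le ht with h0 | hpos
    · have hz : t • G = 0 := by rw [← h0, zero_smul]
      rw [hz]
      apply frobInner_le_of_frobNorm_le
      exact hbest 0 (zero_mem_cone (by show X.rank ≤ k; omega))
    · exact frobInner_le_of_frobNorm_le (hbest (t • G) (smul_mem_cone hpos hG))
  have h1 : frobInner (F - G) (F - G) ≤ frobInner (A - B) (A - B) := by
    have h2 := frobInner_le_of_frobNorm_le (hbest H hHmem)
    rwa [hFH] at h2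
  have hppos : 0 < pp := by rw [hpp]; omega
  have hppR : (0:ℝ) < (pp:ℝ) := by exact_mod_cast hppos
  have hple : (j:ℝ)/(pp:ℝ) * frobInner F F ≤ frobInner G G := by
    have hqnn : (0:ℝ) ≤ ((pp - j : ℕ):ℝ) / (pp:ℝ) := by positivity
    have hchain : frobInner (F - G) (F - G) ≤ ((pp - j : ℕ):ℝ)/(pp:ℝ) * frobInner F F := by
      calc frobInner (F - G) (F - G) ≤ frobInner (A - B) (A - B) := h1
        _ ≤ ((pp - j : ℕ):ℝ)/(pp:ℝ) * frobInner A A := hBnorm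
        _ ≤ ((pp - j : ℕ):ℝ)/(pp:ℝ) * frobInner F F :=
            mul_le_mul_of_nonneg_left hcontr hqnn
    have hcast : ((pp - j : ℕ):ℝ) = (pp:ℝ) - (j:ℝ) := by
      rw [Nat.cast_sub hjp]
    have hfield : ((pp:ℝ) - (j:ℝ))/(pp:ℝ) = 1 - (j:ℝ)/(pp:ℝ) := by
      field_simp
    rw [hcast, hfield] at hchain
    nlinarith [frobInner_self_nonneg F]
  have hc2 : ((k : ℝ) - s) / min ((m : ℝ) - s) ((n : ℝ) - s) = (j:ℝ)/(pp:ℝ) := by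
    have h1 : (k:ℝ) - s = (j:ℝ) := by rw [hj, Nat.cast_sub (le_of_lt hsk)]
    have h2 : min ((m:ℝ) - s) ((n:ℝ) - s) = (pp:ℝ) := by
      rw [hpp, Nat.cast_min, Nat.cast_sub hsm, Nat.cast_sub hsn]
    rw [h1, h2]
  rw [hc2]
  have hs1 : Real.sqrt ((j:ℝ)/(pp:ℝ)) * frobNorm F
      = Real.sqrt ((j:ℝ)/(pp:ℝ) * frobInner F F) := by
    rw [frobNorm, ← Real.sqrt_mul (by positivity)]
  rw [hs1, frobNorm]
  exact Real.sqrt_le_sqrt hple
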